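/- There is an absolute constant C > 0 with the following property. Let d₁, d₂ ≥ 0 be integers and D ≥ 0. Let f, g be square-integrable functions on ℝ² supported on B_{d₁} and B_{d₂} respectively, and suppose that |ξ₁ − ξ₂| ≥ D whenever (τ₁,ξ₁) lies in the support of f and (τ₂,ξ₂) lies in the support of g. Then ∥f * g∥_{L²(ℝ²)} ≤ C 2^{(d₁+d₂)/2} (2^{d₁/2} + 2^{d₂/2} + D)^{−1/2} ∥f∥_{L²} ∥g∥_{L²}. -/

import Mathlib

open MeasureTheory Set
open scoped ENNReal NNReal

noncomputable section

/-- The Japanese bracket `⟨x⟩ = (1+|x|²)^{1/2}`. -/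
def jap (x : ℝ) : ℝ := Real.sqrt (1 + x ^ 2)

/-- The dyadic annulus `A_j = {(τ,ξ) : 2^j ≤ ⟨ξ⟩ < 2^{j+1}}`. -/
def Aset (j : ℕ) : Set (ℝ × ℝ) := {p | (2 : ℝ) ^ j ≤ jap p.2 ∧ jap p.2 < (2 : ℝ) ^ (j + 1)}

/-- The parabolic shell `B_d = {(τ,ξ) : 2^d ≤ ⟨τ-ξ²⟩ < 2^{d+1}}`. -/
def Bset (d : ℕ) : Set (ℝ × ℝ) :=
  {p | (2 : ℝ) ^ d ≤ jap (p.1 - p.2 ^ 2) ∧ jap (p.1 - p.2 ^ 2) < (2 : ℝ) ^ (d + 1)}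

/-- `B_{≥d} = ⋃_{d' ≥ d} B_{d'}`. -/
def Bge (d : ℕ) : Set (ℝ × ℝ) := {p | (2 : ℝ) ^ d ≤ jap (p.1 - p.2 ^ 2)}

/-- `B_{≤d} = ⋃_{0 ≤ d' ≤ d} B_{d'}`. -/
def Ble (d : ℕ) : Set (ℝ × ℝ) := {p | jap (p.1 - p.2 ^ 2) < (2 : ℝ) ^ (d + 1)}

/-- `B_{<d} = ⋃_{0 ≤ d' < d} B_{d'}` (empty when `d = 0`). -/
def Blt (d : ℕ) : Set (ℝ × ℝ) := ⋃ (d' : ℕ) (_ : d' < d), Bset d'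

/-- `A_{≤j} = ⋃_{0 ≤ j' ≤ j} A_{j'}`. -/
def Ale (j : ℕ) : Set (ℝ × ℝ) := {p | jap p.2 < (2 : ℝ) ^ (j + 1)}

/-- A reasonable function: bounded, measurable, compactly supported. -/
def Reasonable (f : ℝ × ℝ → ℂ) : Prop :=
  Measurable f ∧ (∃ C : ℝ, ∀ p, ‖f p‖ ≤ C) ∧ HasCompactSupport f

/-- A nonnegative (real-valued) function. -/
def NonnegFn (f : ℝ × ℝ → ℂ) : Prop := ∀ p, 0 ≤ (f p).re ∧ (f p).im = 0

/-- The `L²` norm of `f` restricted to a set `s ⊆ ℝ²`. -/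
def L2On (f : ℝ × ℝ → ℂ) (s : Set (ℝ × ℝ)) : ℝ≥0∞ :=
  (∫⁻ p in s, (‖f p‖₊ : ℝ≥0∞) ^ 2) ^ (1 / 2 : ℝ)

/-- The `L²(ℝ²)` (equivalently `L²_ξ L²_τ`) norm. -/
def L2 (f : ℝ × ℝ → ℂ) : ℝ≥0∞ := (∫⁻ p : ℝ × ℝ, (‖f p‖₊ : ℝ≥0∞) ^ 2) ^ (1 / 2 : ℝ)

/-- The `L¹_ξ L¹_τ` norm. -/
def L1L1 (f : ℝ × ℝ → ℂ) : ℝ≥0∞ := ∫⁻ p : ℝ × ℝ, (‖f p‖₊ : ℝ≥0∞)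

/-- The weighted norm `∥⟨ξ⟩^{-1} f∥_{L²_ξ L¹_τ}` (inner norm in `τ`, outer in `ξ`). -/
def L2L1w (f : ℝ × ℝ → ℂ) : ℝ≥0∞ :=
  (∫⁻ ξ : ℝ, ((ENNReal.ofReal (jap ξ))⁻¹ * ∫⁻ τ : ℝ, (‖f (τ, ξ)‖₊ : ℝ≥0∞)) ^ 2) ^ (1 / 2 : ℝ)

/-- The `L¹_ξ L²_τ` norm (inner norm in `τ`, outer in `ξ`). -/
def L1L2 (f : ℝ × ℝ → ℂ) : ℝ≥0∞ :=
  ∫⁻ ξ : ℝ, (∫⁻ τ : ℝ, (‖f (τ, ξ)‖₊ : ℝ≥0∞) ^ 2) ^ (1 / 2 : ℝ)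

/-- The Besov-type norm
`∥f∥_X = (∑_j [2^{-j} ∑_d 2^{d/2} ∥f∥_{L²(A_j ∩ B_d)}]²)^{1/2}`
(denoted `X̂^{-1,1/2,1}` in the paper). -/
def Xnorm (f : ℝ × ℝ → ℂ) : ℝ≥0∞ :=
  (∑' j : ℕ, ((2 : ℝ≥0∞) ^ (-(j : ℝ)) *
      ∑' d : ℕ, (2 : ℝ≥0∞) ^ ((d : ℝ) / 2) * L2On f (Aset j ∩ Bset d)) ^ 2) ^ (1 / 2 : ℝ)

/-- The norm `∥f∥_Y = ∥⟨ξ⟩^{-1} f∥_{L²_ξ L¹_τ} + ∥f∥_{L²_ξ L²_τ}`. -/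
def Ynorm (f : ℝ × ℝ → ℂ) : ℝ≥0∞ := L2L1w f + L2 f

/-- The sum-space norm `∥f∥_Z = inf {∥f₁∥_X + ∥f₂∥_Y : f = f₁ + f₂}`. -/
def Znorm (f : ℝ × ℝ → ℂ) : ℝ≥0∞ :=
  ⨅ g : ℝ × ℝ → ℂ, Xnorm g + Ynorm (fun p => f p - g p)

/-- The weight `w(τ,ξ) = max(1,-τ)^{10}` localizing to the upper half-plane. -/
def wfun (p : ℝ × ℝ) : ℝ := max 1 (-p.1) ^ 10

/-- The norm `∥f∥_W = ∥w f∥_Z`. -/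
def Wnorm (f : ℝ × ℝ → ℂ) : ℝ≥0∞ := Znorm (fun p => (wfun p : ℂ) * f p)

/-- Spacetime convolution `(f*g)(τ,ξ) = ∫∫ f(τ₁,ξ₁) g(τ-τ₁, ξ-ξ₁) dτ₁ dξ₁`. -/
def conv (f g : ℝ × ℝ → ℂ) (p : ℝ × ℝ) : ℂ := ∫ q : ℝ × ℝ, f q * g (p - q)

/-- The (Fourier side) `X^{s,b}` norm `∥⟨ξ⟩^s ⟨τ-ξ²⟩^b f∥_{L²_τ L²_ξ}`. -/
def XsbNorm (s b : ℝ) (f : ℝ × ℝ → ℂ) : ℝ≥0∞ :=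
  (∫⁻ p : ℝ × ℝ,
    (ENNReal.ofReal (jap p.2 ^ s * jap (p.1 - p.2 ^ 2) ^ b) * (‖f p‖₊ : ℝ≥0∞)) ^ 2) ^ (1 / 2 : ℝ)

/-- The bilinear-type expression `(w/⟨τ-ξ²⟩)·((f/w) * (g/w))`. -/
def Kop (f g : ℝ × ℝ → ℂ) : ℝ × ℝ → ℂ := fun p =>
  ((wfun p / jap (p.1 - p.2 ^ 2) : ℝ) : ℂ) *
    conv (fun q => f q / (wfun q : ℂ)) (fun q => g q / (wfun q : ℂ)) p

namespace DyadicAux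

lemma abs_le_jap (x : ℝ) : |x| ≤ jap x := by
  rw [jap, ← Real.sqrt_sq_eq_abs]
  exact Real.sqrt_le_sqrt (by nlinarith)

/-- superset of the support intersection -/
def Tset (d₁ d₂ : ℕ) (D : ℝ) (p : ℝ × ℝ) : Set (ℝ × ℝ) :=
  {q | |q.1 - q.2 ^ 2| < 2 ^ (d₁ + 1) ∧ |p.1 - q.1 - (p.2 - q.2) ^ 2| < 2 ^ (d₂ + 1) ∧
       D ≤ |2 * q.2 - p.2|}

lemma Tset_measurable (d₁ d₂ : ℕ) (D : ℝ) (p : ℝ × ℝ) : MeasurableSet (Tset d₁ d₂ D p) := by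
  have h1 : Measurable fun q : ℝ × ℝ => |q.1 - q.2 ^ 2| :=
    (measurable_fst.sub (measurable_snd.pow_const 2)).abs
  have h2 : Measurable fun q : ℝ × ℝ => |p.1 - q.1 - (p.2 - q.2) ^ 2| :=
    (((measurable_const.sub measurable_fst).sub
      ((measurable_const.sub measurable_snd).pow_const 2))).abs
  have h3 : Measurable fun q : ℝ × ℝ => |2 * q.2 - p.2| :=
    ((measurable_snd.const_mul 2).sub measurable_const).abs
  exact (h1 measurableSet_Iio).inter ((h2 measurableSet_Iio).inter (h3 measurableSet_Ici))

lemma Evol (L D τ ξ : ℝ) (hL : 0 < L) (hD : 0 ≤ D) (K : ℝ) (hK : 0 < K)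
    (hKs : K ≤ 2 * Real.sqrt L + D) :
    volume {y : ℝ | |y ^ 2 + (ξ - y) ^ 2 - τ| < L ∧ D ≤ |2 * y - ξ|} ≤
      ENNReal.ofReal (8 * L / K) := by
  set a : ℝ := 2 * τ - ξ ^ 2 with ha
  set s : ℝ := Real.sqrt L with hsdef
  have hs0 : 0 ≤ s := Real.sqrt_nonneg _
  have hs2 : s ^ 2 = L := Real.sq_sqrt hL.le
  set β : ℝ := Real.sqrt (a + 2 * L) with hβdef
  set α : ℝ := max D (Real.sqrt (a - 2 * L)) with hαdef
  have hβ0 : 0 ≤ β := Real.sqrt_nonneg _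
  have hα0 : 0 ≤ α := le_trans hD (le_max_left _ _)
  have hαD : D ≤ α := le_max_left _ _
  -- the set is contained in two intervals
  have hsub : {y : ℝ | |y ^ 2 + (ξ - y) ^ 2 - τ| < L ∧ D ≤ |2 * y - ξ|} ⊆
      Icc ((α + ξ) / 2) ((β + ξ) / 2) ∪ Icc ((ξ - β) / 2) ((ξ - α) / 2) := by
    rintro y ⟨h1, h2⟩
    set u : ℝ := 2 * y - ξ with hu
    have hid : u ^ 2 = 2 * (y ^ 2 + (ξ - y) ^ 2) - ξ ^ 2 := by ring
    have habs : |u| = Real.sqrt (u ^ 2) := (Real.sqrt_sq_eq_abs u).symm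
    have hu1 : u ^ 2 < a + 2 * L := by
      have := abs_lt.mp h1
      rw [hid, ha]; nlinarith [this.1, this.2]
    have hu2 : a - 2 * L < u ^ 2 := by
      have := abs_lt.mp h1
      rw [hid, ha]; nlinarith [this.1, this.2]
    have hub : |u| ≤ β := by
      rw [habs, hβdef]; exact Real.sqrt_le_sqrt hu1.le
    have hlb : α ≤ |u| := by
      rw [hαdef]
      refine max_le h2 ?_
      rw [habs]; exact Real.sqrt_le_sqrt hu2.le
    rcases le_or_gt 0 u with hpos | hneg
    · left
      rw [abs_of_nonneg hpos] at hub hlb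
      simp only [hu] at hub hlb
      exact ⟨by linarith, by linarith⟩
    · right
      rw [abs_of_neg hneg] at hub hlb
      simp only [hu] at hub hlb
      exact ⟨by linarith, by linarith⟩
  -- β - α ≤ 8 L / K
  have hkey : β - α ≤ 8 * L / K := by
    rw [le_div_iff₀ hK]
    rcases le_or_gt β α with hba | hba
    · nlinarith
    · have hα2 : a - 2 * L ≤ α ^ 2 := by
        rcases le_or_gt (a - 2 * L) 0 with h | h
        · nlinarith
        · have : Real.sqrt (a - 2 * L) ≤ α := le_max_right _ _
          nlinarith [Real.sq_sqrt h.le, Real.sqrt_nonneg (a - 2 * L)]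
      have hβ2 : β ^ 2 ≤ a + 2 * L := by
        rcases le_or_gt (a + 2 * L) 0 with h | h
        · have : β = 0 := Real.sqrt_eq_zero_of_nonpos h
          nlinarith
        · nlinarith [Real.sq_sqrt h.le]
      have hdiff : β ^ 2 - α ^ 2 ≤ 4 * L := by nlinarith
      have h2s : β - α ≤ 2 * s := by nlinarith
      nlinarith [mul_le_mul_of_nonneg_left hKs (le_of_lt (sub_pos.mpr hba)),
        mul_le_mul_of_nonneg_left hαD (le_of_lt (sub_pos.mpr hba))]
  calc volume {y : ℝ | |y ^ 2 + (ξ - y) ^ 2 - τ| < L ∧ D ≤ |2 * y - ξ|}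
      ≤ volume (Icc ((α + ξ) / 2) ((β + ξ) / 2) ∪ Icc ((ξ - β) / 2) ((ξ - α) / 2)) :=
        measure_mono hsub
    _ ≤ volume (Icc ((α + ξ) / 2) ((β + ξ) / 2)) + volume (Icc ((ξ - β) / 2) ((ξ - α) / 2)) :=
        measure_union_le _ _
    _ = ENNReal.ofReal ((β - α) / 2) + ENNReal.ofReal ((β - α) / 2) := by
        rw [Real.volume_Icc, Real.volume_Icc]; ring_nf
    _ ≤ ENNReal.ofReal (4 * L / K) + ENNReal.ofReal (4 * L / K) := by
        have : (β - α) / 2 ≤ 4 * L / K := by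
          have : 4 * L / K = (8 * L / K) / 2 := by ring
          rw [this]; linarith
        exact add_le_add (ENNReal.ofReal_le_ofReal this) (ENNReal.ofReal_le_ofReal this)
    _ = ENNReal.ofReal (8 * L / K) := by
        rw [← ENNReal.ofReal_add (by positivity) (by positivity)]; ring_nf


lemma pow_half_le_sqrt (d : ℕ) (L : ℝ) (h : (2:ℝ) ^ d ≤ L) :
    (2:ℝ) ^ ((d:ℝ)/2) ≤ Real.sqrt L := by
  have h1 : (2:ℝ) ^ ((d:ℝ)/2) = Real.sqrt ((2:ℝ) ^ (d:ℕ)) := by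
    rw [Real.sqrt_eq_rpow, ← Real.rpow_natCast 2 d, ← Real.rpow_mul (by norm_num : (0:ℝ) ≤ 2)]
    ring_nf
  rw [h1]
  exact Real.sqrt_le_sqrt h

lemma Tvol (d₁ d₂ : ℕ) (D : ℝ) (hD : 0 ≤ D) (p : ℝ × ℝ) :
    volume (Tset d₁ d₂ D p) ≤
      ENNReal.ofReal (144 * 2 ^ (d₁ + d₂) /
        ((2:ℝ) ^ ((d₁:ℝ)/2) + 2 ^ ((d₂:ℝ)/2) + D)) := by
  set r₁ : ℝ := 2 ^ (d₁ + 1) with hr₁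
  set r₂ : ℝ := 2 ^ (d₂ + 1) with hr₂
  have hr₁0 : 0 < r₁ := by positivity
  have hr₂0 : 0 < r₂ := by positivity
  set L : ℝ := r₁ + r₂ with hLdef
  have hL : 0 < L := by positivity
  set K : ℝ := (2:ℝ) ^ ((d₁:ℝ)/2) + 2 ^ ((d₂:ℝ)/2) + D with hKdef
  have hK : 0 < K := by positivity
  set m : ℝ := min (2*r₁) (2*r₂) with hm
  have hm0 : 0 ≤ m := by positivity
  set E : Set ℝ := {y | |y^2 + (p.2 - y)^2 - p.1| < L ∧ D ≤ |2*y - p.2|} with hE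
  have hEmeas : MeasurableSet E := by
    have h1 : Measurable fun y : ℝ => |y^2 + (p.2 - y)^2 - p.1| :=
      ((((measurable_id.pow_const 2).add ((measurable_const.sub measurable_id).pow_const 2)).sub
        measurable_const)).abs
    have h2 : Measurable fun y : ℝ => |2*y - p.2| :=
      ((measurable_id.const_mul 2).sub measurable_const).abs
    exact (h1 measurableSet_Iio).inter (h2 measurableSet_Ici)
  have hslice : ∀ y : ℝ, volume ((fun x => (x, y)) ⁻¹' Tset d₁ d₂ D p) ≤
      E.indicator (fun _ => ENNReal.ofReal m) y := by
    intro y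
    by_cases hy : y ∈ E
    · rw [Set.indicator_of_mem hy]
      rcases le_total (2*r₁) (2*r₂) with h | h
      · rw [hm, min_eq_left h]
        refine le_trans (measure_mono (show _ ⊆ Set.Ioo (y^2 - r₁) (y^2 + r₁) from ?_)) ?_
        · exact fun τ₁ hτ => (Set.mem_Ioo).mpr
            ⟨by have := abs_lt.mp hτ.1; simp only at this ⊢; linarith [this.1],
             by have := abs_lt.mp hτ.1; simp only at this ⊢; linarith [this.2]⟩
        · rw [Real.volume_Ioo]
          exact ENNReal.ofReal_le_ofReal (by ring_nf; linarith)
      · rw [hm, min_eq_right h]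
        refine le_trans (measure_mono (show _ ⊆ Set.Ioo (p.1 - (p.2 - y)^2 - r₂) (p.1 - (p.2 - y)^2 + r₂) from ?_)) ?_
        · exact fun τ₁ hτ => (Set.mem_Ioo).mpr
            ⟨by have := abs_lt.mp hτ.2.1; simp only at this ⊢; linarith [this.2],
             by have := abs_lt.mp hτ.2.1; simp only at this ⊢; linarith [this.1]⟩
        · rw [Real.volume_Ioo]
          exact ENNReal.ofReal_le_ofReal (by ring_nf; linarith)
    · rw [Set.indicator_of_notMem hy]
      have : ((fun x => (x, y)) ⁻¹' Tset d₁ d₂ D p) = ∅ := by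
        ext τ₁
        simp only [Set.mem_preimage, Set.mem_empty_iff_false, iff_false]
        intro hτ
        obtain ⟨h1, h2, h3⟩ := hτ
        exact hy ⟨by
          have a1 := abs_lt.mp h1
          have a2 := abs_lt.mp h2
          rw [abs_lt]
          constructor <;> simp only at a1 a2 ⊢ <;> nlinarith [a1.1, a1.2, a2.1, a2.2], h3⟩
      rw [this]
      simp
  have hvol : volume (Tset d₁ d₂ D p) ≤ ENNReal.ofReal m * volume E := by
    rw [MeasureTheory.Measure.volume_eq_prod, Measure.prod_apply_symm (Tset_measurable d₁ d₂ D p)]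
    calc ∫⁻ y, volume ((fun x => (x, y)) ⁻¹' Tset d₁ d₂ D p) ≤
        ∫⁻ y, E.indicator (fun _ => ENNReal.ofReal m) y := lintegral_mono hslice
      _ = ENNReal.ofReal m * volume E := by
          rw [lintegral_indicator hEmeas, MeasureTheory.setLIntegral_const]
  have hEvol : volume E ≤ ENNReal.ofReal (8 * L / K) := by
    refine Evol L D p.1 p.2 hL hD K hK ?_
    have h1 : (2:ℝ) ^ ((d₁:ℝ)/2) ≤ Real.sqrt L :=
      pow_half_le_sqrt d₁ L (by rw [hLdef, hr₁, hr₂]; nlinarith [pow_le_pow_right₀ (by norm_num : (1:ℝ) ≤ 2) (Nat.le_add_right d₁ 1), pow_pos (by norm_num : (0:ℝ) < 2) (d₂+1)])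
    have h2 : (2:ℝ) ^ ((d₂:ℝ)/2) ≤ Real.sqrt L :=
      pow_half_le_sqrt d₂ L (by rw [hLdef, hr₁, hr₂]; nlinarith [pow_le_pow_right₀ (by norm_num : (1:ℝ) ≤ 2) (Nat.le_add_right d₂ 1), pow_pos (by norm_num : (0:ℝ) < 2) (d₁+1)])
    rw [hKdef]
    linarith [h1, h2]
  calc volume (Tset d₁ d₂ D p) ≤ ENNReal.ofReal m * ENNReal.ofReal (8 * L / K) :=
        le_trans hvol (mul_le_mul_right hEvol _)
    _ = ENNReal.ofReal (m * (8 * L / K)) := (ENNReal.ofReal_mul hm0).symm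
    _ ≤ ENNReal.ofReal (144 * 2 ^ (d₁ + d₂) / K) := by
        refine ENNReal.ofReal_le_ofReal ?_
        have : m * (8 * L / K) = m * (8 * L) / K := by ring
        rw [this, div_le_div_iff_of_pos_right hK]
        have hx : (0:ℝ) < 2 ^ d₁ := by positivity
        have hy : (0:ℝ) < 2 ^ d₂ := by positivity
        have hpadd : (2:ℝ) ^ (d₁ + d₂) = 2 ^ d₁ * 2 ^ d₂ := pow_add 2 d₁ d₂
        have e1 : r₁ = 2 * 2 ^ d₁ := by rw [hr₁, pow_succ]; ring
        have e2 : r₂ = 2 * 2 ^ d₂ := by rw [hr₂, pow_succ]; ring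
        rcases le_total d₁ d₂ with hdd | hdd
        · have h12 : (2:ℝ) ^ d₁ ≤ 2 ^ d₂ := pow_le_pow_right₀ (by norm_num) hdd
          have hm' : m ≤ 4 * 2 ^ d₁ := le_trans (min_le_left _ _) (by linarith [e1])
          have hL' : L ≤ 4 * 2 ^ d₂ := by linarith [e1, e2, h12, hLdef]
          calc m * (8 * L) ≤ (4 * 2^d₁) * (8 * (4 * 2^d₂)) :=
                mul_le_mul hm' (by linarith) (by positivity) (by positivity)
            _ = 128 * (2^d₁ * 2^d₂) := by ring
            _ ≤ 144 * 2 ^ (d₁+d₂) := by rw [hpadd]; nlinarith [hx, hy]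
        · have h12 : (2:ℝ) ^ d₂ ≤ 2 ^ d₁ := pow_le_pow_right₀ (by norm_num) hdd
          have hm' : m ≤ 4 * 2 ^ d₂ := le_trans (min_le_right _ _) (by linarith [e2])
          have hL' : L ≤ 4 * 2 ^ d₁ := by linarith [e1, e2, h12, hLdef]
          calc m * (8 * L) ≤ (4 * 2^d₂) * (8 * (4 * 2^d₁)) :=
                mul_le_mul hm' (by linarith) (by positivity) (by positivity)
            _ = 128 * (2^d₁ * 2^d₂) := by ring
            _ ≤ 144 * 2 ^ (d₁+d₂) := by rw [hpadd]; nlinarith [hx, hy]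

end DyadicAux

namespace DyadicAux

lemma rpow_two' (x : ℝ≥0∞) : x ^ (2:ℝ) = x ^ (2:ℕ) := by
  rw [show (2:ℝ) = ((2:ℕ):ℝ) by norm_num, ENNReal.rpow_natCast]

lemma conv_sq_le (d₁ d₂ : ℕ) (D : ℝ) (f g : ℝ × ℝ → ℂ)
    (hf : AEStronglyMeasurable f volume) (hg : AEStronglyMeasurable g volume)
    (hsf : Function.support f ⊆ Bset d₁) (hsg : Function.support g ⊆ Bset d₂)
    (hsep : ∀ p q : ℝ × ℝ, f p ≠ 0 → g q ≠ 0 → D ≤ |p.2 - q.2|) (p : ℝ × ℝ) :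
    (‖conv f g p‖₊ : ℝ≥0∞) ^ (2:ℕ) ≤ volume (Tset d₁ d₂ D p) *
      ∫⁻ q, (‖f q‖₊ : ℝ≥0∞) ^ (2:ℕ) * (‖g (p - q)‖₊ : ℝ≥0∞) ^ (2:ℕ) := by
  set h : (ℝ × ℝ) → ℝ≥0∞ := fun q => (‖f q‖₊ : ℝ≥0∞) * (‖g (p - q)‖₊ : ℝ≥0∞) with hh
  set u : (ℝ × ℝ) → ℝ≥0∞ := (Tset d₁ d₂ D p).indicator (fun _ => (1:ℝ≥0∞)) with hu
  have hT := Tset_measurable d₁ d₂ D p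
  have hgcomp : AEMeasurable (fun q : ℝ × ℝ => (‖g (p - q)‖₊ : ℝ≥0∞)) volume := by
    have := (hg.enorm).comp_quasiMeasurePreserving
      (Measure.measurePreserving_sub_left volume p).quasiMeasurePreserving
    exact this
  have hmeash : AEMeasurable h volume := hf.enorm.mul hgcomp
  have step1 : (‖conv f g p‖₊ : ℝ≥0∞) ≤ ∫⁻ q, h q := by
    refine le_trans (enorm_integral_le_lintegral_enorm _) (le_of_eq ?_)
    refine lintegral_congr fun q => ?_
    rw [hh, enorm_mul]; rfl
  have step2 : ∀ q, h q = u q * h q := by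
    intro q
    by_cases hq : q ∈ Tset d₁ d₂ D p
    · rw [hu, Set.indicator_of_mem hq, one_mul]
    · rw [hu, Set.indicator_of_notMem hq, zero_mul]
      by_contra hne
      have hfq : f q ≠ 0 := by
        intro h0; apply hne; rw [hh]; simp [h0]
      have hgq : g (p - q) ≠ 0 := by
        intro h0; apply hne; rw [hh]; simp [h0]
      apply hq
      have hb1 := hsf (Function.mem_support.mpr hfq)
      have hb2 := hsg (Function.mem_support.mpr hgq)
      refine ⟨lt_of_le_of_lt (abs_le_jap _) hb1.2, ?_, ?_⟩
      · have := lt_of_le_of_lt (abs_le_jap ((p - q).1 - (p - q).2 ^ 2)) hb2.2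
        simpa using this
      · have := hsep q (p - q) hfq hgq
        have e : q.2 - (p - q).2 = 2 * q.2 - p.2 := by simp; ring
        rwa [e] at this
  have hCS : ∫⁻ q, u q * h q ≤
      (∫⁻ q, u q ^ (2:ℝ)) ^ (1/2:ℝ) * (∫⁻ q, h q ^ (2:ℝ)) ^ (1/2:ℝ) := by
    have hconj : (2:ℝ).HolderConjugate 2 := by rw [Real.holderConjugate_iff]; constructor <;> norm_num
    exact ENNReal.lintegral_mul_le_Lp_mul_Lq volume hconj
      ((measurable_const.indicator hT).aemeasurable) hmeash
  have hu2 : ∫⁻ q, u q ^ (2:ℝ) = volume (Tset d₁ d₂ D p) := by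
    rw [← lintegral_indicator_one hT]
    refine lintegral_congr fun q => ?_
    by_cases hq : q ∈ Tset d₁ d₂ D p
    · simp [hu, Set.indicator_of_mem hq]
    · simp [hu, Set.indicator_of_notMem hq, ENNReal.zero_rpow_of_pos (by norm_num : (0:ℝ) < 2)]
  have main : (‖conv f g p‖₊ : ℝ≥0∞) ≤
      (volume (Tset d₁ d₂ D p)) ^ (1/2:ℝ) * (∫⁻ q, h q ^ (2:ℝ)) ^ (1/2:ℝ) := by
    calc (‖conv f g p‖₊ : ℝ≥0∞) ≤ ∫⁻ q, h q := step1
      _ = ∫⁻ q, u q * h q := lintegral_congr step2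
      _ ≤ _ := by rw [← hu2]; exact hCS
  calc (‖conv f g p‖₊ : ℝ≥0∞) ^ (2:ℕ)
      ≤ ((volume (Tset d₁ d₂ D p)) ^ (1/2:ℝ) * (∫⁻ q, h q ^ (2:ℝ)) ^ (1/2:ℝ)) ^ (2:ℕ) :=
        pow_le_pow_left' main 2
    _ = volume (Tset d₁ d₂ D p) * ∫⁻ q, h q ^ (2:ℝ) := by
        rw [mul_pow]
        congr 1 <;> · rw [← ENNReal.rpow_natCast _ 2, ← ENNReal.rpow_mul]; norm_num
    _ = volume (Tset d₁ d₂ D p) * ∫⁻ q, (‖f q‖₊ : ℝ≥0∞) ^ (2:ℕ) * (‖g (p - q)‖₊ : ℝ≥0∞) ^ (2:ℕ) := by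
        congr 1
        refine lintegral_congr fun q => ?_
        rw [hh, ENNReal.mul_rpow_of_nonneg _ _ (by norm_num : (0:ℝ) ≤ 2), rpow_two', rpow_two']

lemma tonelli_conv (f g : ℝ × ℝ → ℂ)
    (hf : AEStronglyMeasurable f volume) (hg : AEStronglyMeasurable g volume) :
    ∫⁻ p : ℝ × ℝ, ∫⁻ q, (‖f q‖₊ : ℝ≥0∞) ^ (2:ℕ) * (‖g (p - q)‖₊ : ℝ≥0∞) ^ (2:ℕ) =
      (∫⁻ q, (‖f q‖₊ : ℝ≥0∞) ^ (2:ℕ)) * ∫⁻ q, (‖g q‖₊ : ℝ≥0∞) ^ (2:ℕ) := by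
  have hfm : AEMeasurable (fun q : ℝ × ℝ => (‖f q‖₊ : ℝ≥0∞) ^ (2:ℕ)) volume :=
    hf.enorm.pow_const 2
  have hgm : AEMeasurable (fun q : ℝ × ℝ => (‖g q‖₊ : ℝ≥0∞) ^ (2:ℕ)) volume :=
    hg.enorm.pow_const 2
  have hF : AEMeasurable (Function.uncurry fun p q : ℝ × ℝ =>
      (‖f q‖₊ : ℝ≥0∞) ^ (2:ℕ) * (‖g (p - q)‖₊ : ℝ≥0∞) ^ (2:ℕ))
      ((volume : Measure (ℝ × ℝ)).prod volume) := by
    have h1 : AEMeasurable (fun z : (ℝ × ℝ) × (ℝ × ℝ) => (‖f z.2‖₊ : ℝ≥0∞) ^ (2:ℕ))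
        ((volume : Measure (ℝ × ℝ)).prod volume) :=
      hfm.comp_quasiMeasurePreserving Measure.quasiMeasurePreserving_snd
    have hqmp : Measure.QuasiMeasurePreserving (fun z : (ℝ × ℝ) × (ℝ × ℝ) => z.1 - z.2)
        ((volume : Measure (ℝ × ℝ)).prod volume) (volume : Measure (ℝ × ℝ)) := by
      have := Measure.quasiMeasurePreserving_fst.comp
        (measurePreserving_sub_prod (volume : Measure (ℝ × ℝ)) volume).quasiMeasurePreserving
      exact this
    have h2 : AEMeasurable (fun z : (ℝ × ℝ) × (ℝ × ℝ) => (‖g (z.1 - z.2)‖₊ : ℝ≥0∞) ^ (2:ℕ))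
        ((volume : Measure (ℝ × ℝ)).prod volume) := hgm.comp_quasiMeasurePreserving hqmp
    exact h1.mul h2
  rw [lintegral_lintegral_swap hF]
  have inner : ∀ q : ℝ × ℝ, ∫⁻ p : ℝ × ℝ, (‖f q‖₊ : ℝ≥0∞) ^ (2:ℕ) * (‖g (p - q)‖₊ : ℝ≥0∞) ^ (2:ℕ)
      = (‖f q‖₊ : ℝ≥0∞) ^ (2:ℕ) * ∫⁻ q', (‖g q'‖₊ : ℝ≥0∞) ^ (2:ℕ) := by
    intro q
    rw [lintegral_const_mul' _ _ (ENNReal.pow_ne_top ENNReal.coe_ne_top)]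
    congr 1
    simp_rw [sub_eq_add_neg]
    exact lintegral_add_right_eq_self (fun p => (‖g p‖₊ : ℝ≥0∞) ^ (2:ℕ)) (-q)
  calc ∫⁻ q : ℝ × ℝ, ∫⁻ p : ℝ × ℝ, (‖f q‖₊ : ℝ≥0∞) ^ (2:ℕ) * (‖g (p - q)‖₊ : ℝ≥0∞) ^ (2:ℕ)
      = ∫⁻ q : ℝ × ℝ, (‖f q‖₊ : ℝ≥0∞) ^ (2:ℕ) * ∫⁻ q', (‖g q'‖₊ : ℝ≥0∞) ^ (2:ℕ) :=
        lintegral_congr inner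
    _ = _ := lintegral_mul_const'' _ hfm

end DyadicAux

/-- **Dyadic bilinear estimate**: if `f ∈ L²` is supported on `B_{d₁}` and `g ∈ L²` on
`B_{d₂}`, with `ξ`-supports separated by at least `D`, then
`∥f*g∥_{L²} ≤ C 2^{(d₁+d₂)/2}(2^{d₁/2}+2^{d₂/2}+D)^{-1/2} ∥f∥_{L²} ∥g∥_{L²}`. -/
theorem dyadic_bilinear_estimate :
    ∃ C : ℝ, 0 < C ∧ ∀ (d₁ d₂ : ℕ) (D : ℝ), 0 ≤ D →
      ∀ f g : ℝ × ℝ → ℂ, MemLp f 2 volume → MemLp g 2 volume →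
        Function.support f ⊆ Bset d₁ → Function.support g ⊆ Bset d₂ →
        (∀ p q : ℝ × ℝ, f p ≠ 0 → g q ≠ 0 → D ≤ |p.2 - q.2|) →
        L2 (conv f g) ≤
          ENNReal.ofReal (C * (2 : ℝ) ^ (((d₁ : ℝ) + (d₂ : ℝ)) / 2) *
              ((2 : ℝ) ^ ((d₁ : ℝ) / 2) + (2 : ℝ) ^ ((d₂ : ℝ) / 2) + D) ^ (-(1 / 2) : ℝ)) *
            L2 f * L2 g := by
  refine ⟨12, by norm_num, ?_⟩
  intro d₁ d₂ D hD f g hf hg hsf hsg hsep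
  set K : ℝ := (2:ℝ) ^ ((d₁:ℝ)/2) + (2:ℝ) ^ ((d₂:ℝ)/2) + D with hK
  have hK0 : 0 < K := by positivity
  set x : ℝ := 144 * 2 ^ (d₁ + d₂) / K with hx
  have hx0 : 0 < x := by positivity
  set M : ℝ≥0∞ := ENNReal.ofReal x with hM
  set If : ℝ≥0∞ := ∫⁻ q : ℝ × ℝ, (‖f q‖₊ : ℝ≥0∞) ^ 2 with hIf
  set Ig : ℝ≥0∞ := ∫⁻ q : ℝ × ℝ, (‖g q‖₊ : ℝ≥0∞) ^ 2 with hIg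
  have hfm := hf.aestronglyMeasurable
  have hgm := hg.aestronglyMeasurable
  have hconvsq : ∀ p : ℝ × ℝ, (‖conv f g p‖₊ : ℝ≥0∞) ^ 2 ≤
      M * ∫⁻ q, (‖f q‖₊ : ℝ≥0∞) ^ 2 * (‖g (p - q)‖₊ : ℝ≥0∞) ^ 2 := fun p =>
    le_trans (DyadicAux.conv_sq_le d₁ d₂ D f g hfm hgm hsf hsg hsep p)
      (mul_le_mul_left (DyadicAux.Tvol d₁ d₂ D hD p) _)
  have hint : ∫⁻ p : ℝ × ℝ, (‖conv f g p‖₊ : ℝ≥0∞) ^ 2 ≤ M * (If * Ig) := by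
    calc ∫⁻ p : ℝ × ℝ, (‖conv f g p‖₊ : ℝ≥0∞) ^ 2
        ≤ ∫⁻ p : ℝ × ℝ, M * ∫⁻ q, (‖f q‖₊ : ℝ≥0∞) ^ 2 * (‖g (p - q)‖₊ : ℝ≥0∞) ^ 2 :=
          lintegral_mono hconvsq
      _ = M * ∫⁻ p : ℝ × ℝ, ∫⁻ q, (‖f q‖₊ : ℝ≥0∞) ^ 2 * (‖g (p - q)‖₊ : ℝ≥0∞) ^ 2 :=
          lintegral_const_mul' _ _ ENNReal.ofReal_ne_top
      _ = M * (If * Ig) := by rw [DyadicAux.tonelli_conv f g hfm hgm]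
  have hM12 : M ^ (1/2:ℝ) ≤ ENNReal.ofReal
      (12 * (2:ℝ) ^ (((d₁:ℝ) + (d₂:ℝ))/2) * K ^ (-(1/2) : ℝ)) := by
    rw [hM, ENNReal.ofReal_rpow_of_pos hx0]
    refine ENNReal.ofReal_le_ofReal ?_
    set R : ℝ := 12 * (2:ℝ) ^ (((d₁:ℝ) + (d₂:ℝ))/2) * K ^ (-(1/2) : ℝ) with hR
    have hR0 : 0 < R := by positivity
    have hxR : x ≤ R ^ 2 := by
      have h2c : (2:ℝ) ^ (((d₁:ℝ)+(d₂:ℝ))/2) * (2:ℝ) ^ (((d₁:ℝ)+(d₂:ℝ))/2)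
          = (2:ℝ) ^ (d₁ + d₂) := by
        rw [← Real.rpow_add (by norm_num : (0:ℝ) < 2)]
        rw [show ((d₁:ℝ)+(d₂:ℝ))/2 + ((d₁:ℝ)+(d₂:ℝ))/2 = ((d₁+d₂ : ℕ):ℝ) by push_cast; ring]
        rw [Real.rpow_natCast]
      have hKc : K ^ (-(1/2):ℝ) * K ^ (-(1/2):ℝ) = K⁻¹ := by
        rw [← Real.rpow_add hK0, show -(1/2) + -(1/2) = (-1:ℝ) by norm_num, Real.rpow_neg_one]
      have hRe : R ^ 2 = 144 * ((2:ℝ) ^ (((d₁:ℝ)+(d₂:ℝ))/2) * (2:ℝ) ^ (((d₁:ℝ)+(d₂:ℝ))/2)) *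
          (K ^ (-(1/2):ℝ) * K ^ (-(1/2):ℝ)) := by rw [hR]; ring
      rw [hRe, h2c, hKc, hx, div_eq_mul_inv]
    calc x ^ (1/2:ℝ) ≤ (R ^ 2) ^ (1/2:ℝ) := Real.rpow_le_rpow hx0.le hxR (by norm_num)
      _ = R := by
          rw [← Real.rpow_natCast R 2, ← Real.rpow_mul hR0.le]
          norm_num
  calc L2 (conv f g) = (∫⁻ p : ℝ × ℝ, (‖conv f g p‖₊ : ℝ≥0∞) ^ 2) ^ (1/2:ℝ) := rfl
    _ ≤ (M * (If * Ig)) ^ (1/2:ℝ) := ENNReal.rpow_le_rpow hint (by norm_num)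
    _ = M ^ (1/2:ℝ) * (If ^ (1/2:ℝ) * Ig ^ (1/2:ℝ)) := by
        rw [ENNReal.mul_rpow_of_nonneg _ _ (by norm_num : (0:ℝ) ≤ 1/2),
          ENNReal.mul_rpow_of_nonneg _ _ (by norm_num : (0:ℝ) ≤ 1/2)]
    _ ≤ ENNReal.ofReal (12 * (2:ℝ) ^ (((d₁:ℝ) + (d₂:ℝ))/2) * K ^ (-(1/2) : ℝ)) *
        (If ^ (1/2:ℝ) * Ig ^ (1/2:ℝ)) := mul_le_mul_left hM12 _
    _ = ENNReal.ofReal (12 * (2:ℝ) ^ (((d₁:ℝ) + (d₂:ℝ))/2) * K ^ (-(1/2) : ℝ)) *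
        L2 f * L2 g := by
          unfold L2
          exact (mul_assoc _ _ _).symm
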